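/- Let p be a prime. Suppose (N, σ, δ) is an admissible triple, I is a subset of {i ∈ ℕ : σ_i ≠ 0 and i ≠ N}, and r, t are non-negative integers satisfying t + 2σ_I = (p^N - 1) + σ and r ≡ (p^N - 1) + σ + 2δ (mod 2p^{N+1}). Then r ≥ t and r ≡ t (mod 2). -/
import Mathlib


/-- The `i`-th digit of the base-`p` expansion of `n`. -/
def digit (p n i : ℕ) : ℕ := n / p ^ i % p

/-- `σ_I = ∑_{i ∈ I} p^i σ_i`. -/
def digitSum (p σ : ℕ) (I : Finset ℕ) : ℕ := ∑ i ∈ I, p ^ i * digit p σ i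

/-- An admissible triple `(N, σ, δ)`. -/
def AdmissibleTriple (p N σ δ : ℕ) : Prop :=
  σ < p ^ (N + 1) - p ^ N ∧ δ < p ^ (N + 1) - p ^ N ∧
  (∀ i < N, digit p σ i + digit p δ i ≤ p - 1) ∧
  digit p σ N + digit p δ N < p - 1

/-- An admissible quadruple `(N, σ, δ, I)`. -/
def AdmissibleQuadruple (p N σ δ : ℕ) (I : Finset ℕ) : Prop :=
  AdmissibleTriple p N σ δ ∧ ∀ i ∈ I, digit p σ i ≠ 0 ∧ i ≠ N

/-- An admissible quadruple for the pair `(r, t)`. -/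
def AdmissibleQuadrupleFor (p r t N σ δ : ℕ) (I : Finset ℕ) : Prop :=
  AdmissibleQuadruple p N σ δ I ∧
  t + 2 * digitSum p σ I = p ^ N - 1 + σ ∧
  r ≡ p ^ N - 1 + σ + 2 * δ [MOD 2 * p ^ (N + 1)]


lemma sum_digits (p : ℕ) (hp : 2 ≤ p) : ∀ (n : ℕ) (a : ℕ), a < p ^ n →
    ∑ i ∈ Finset.range n, p ^ i * digit p a i = a := by
  intro n
  induction n with
  | zero => intro a ha; simp at ha; simp [ha]
  | succ n ih =>
    intro a ha
    rw [Finset.sum_range_succ']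
    have h2 : a / p < p ^ n := by
      rw [Nat.div_lt_iff_lt_mul (by omega)]
      calc a < p ^ (n+1) := ha
        _ = p ^ n * p := pow_succ p n
    have key : ∀ i ∈ Finset.range n, p ^ (i+1) * digit p a (i+1)
        = p * (p ^ i * digit p (a / p) i) := by
      intro i _
      have h1 : digit p a (i+1) = digit p (a / p) i := by
        simp [digit, pow_succ, Nat.div_div_eq_div_mul, Nat.mul_comm]
      rw [h1, pow_succ]; ring
    rw [Finset.sum_congr rfl key, ← Finset.mul_sum, ih _ h2]
    simpa [digit] using Nat.div_add_mod a p

lemma geom (p N : ℕ) (hp : 2 ≤ p) :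
    ∑ i ∈ Finset.range N, p ^ i * (p - 1) = p ^ N - 1 := by
  induction N with
  | zero => simp
  | succ n ih =>
    rw [Finset.sum_range_succ, ih]
    have h1 : 1 ≤ p ^ n := Nat.one_le_pow _ _ (by omega)
    have h2 : p ^ n * (p - 1) = p ^ n * p - p ^ n := by rw [Nat.mul_sub, mul_one]
    have h3 : p ^ (n+1) = p ^ n * p := pow_succ p n
    have h4 : p ^ n * 2 ≤ p ^ n * p := Nat.mul_le_mul_left _ (by omega)
    rw [h2, h3]
    omega

theorem main_9 (p : ℕ) (hp2 : 2 ≤ p) (N σ δ : ℕ)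
    (hσ : σ < p ^ (N + 1) - p ^ N) (hδ : δ < p ^ (N + 1) - p ^ N)
    (hd : ∀ i < N, digit p σ i + digit p δ i ≤ p - 1)
    (hdN : digit p σ N + digit p δ N < p - 1) :
    p ^ N - 1 + σ + 2 * δ < 2 * p ^ (N + 1) := by
  have hA : 1 ≤ p ^ N := Nat.one_le_pow _ _ (by omega)
  have hB : p ^ (N + 1) = p ^ N * p := pow_succ p N
  have hB2 : p ^ N * 2 ≤ p ^ N * p := Nat.mul_le_mul_left _ hp2
  have hσ' : σ < p ^ (N + 1) := by omega
  have hδ' : δ < p ^ (N + 1) := by omega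
  have hsσ := sum_digits p hp2 (N + 1) σ hσ'
  have hsδ := sum_digits p hp2 (N + 1) δ hδ'
  have hsum : σ + δ = ∑ i ∈ Finset.range (N + 1),
      p ^ i * (digit p σ i + digit p δ i) := by
    calc σ + δ = ∑ i ∈ Finset.range (N + 1), p ^ i * digit p σ i
          + ∑ i ∈ Finset.range (N + 1), p ^ i * digit p δ i := by rw [hsσ, hsδ]
      _ = _ := by
          rw [← Finset.sum_add_distrib]
          exact Finset.sum_congr rfl fun i _ => by ring
  have hbound : σ + δ ≤ (p ^ N - 1) + p ^ N * (p - 2) := by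
    rw [hsum, Finset.sum_range_succ]
    have h1 : ∑ i ∈ Finset.range N, p ^ i * (digit p σ i + digit p δ i)
        ≤ ∑ i ∈ Finset.range N, p ^ i * (p - 1) := by
      apply Finset.sum_le_sum
      intro i hi
      exact Nat.mul_le_mul_left _ (hd i (Finset.mem_range.mp hi))
    have h2 : p ^ N * (digit p σ N + digit p δ N) ≤ p ^ N * (p - 2) := by
      exact Nat.mul_le_mul_left _ (by omega)
    have h3 := geom p N hp2
    omega
  have hrel : p ^ N * (p - 2) = p ^ (N + 1) - 2 * p ^ N := by
    rw [Nat.mul_sub, hB]; omega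
  omega


theorem stmt_9 (p : ℕ) (hp : p.Prime) (N σ δ : ℕ) (I : Finset ℕ)
    (ht : AdmissibleTriple p N σ δ) (hI : ∀ i ∈ I, digit p σ i ≠ 0 ∧ i ≠ N)
    (r t : ℕ) (h1 : t + 2 * digitSum p σ I = p ^ N - 1 + σ)
    (h2 : r ≡ p ^ N - 1 + σ + 2 * δ [MOD 2 * p ^ (N + 1)]) :
    t ≤ r ∧ r % 2 = t % 2 := by
  obtain ⟨hσ, hδ, hd, hdN⟩ := ht
  have hp2 : 2 ≤ p := hp.two_le
  have hX := main_9 p hp2 N σ δ hσ hδ hd hdN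
  have hXM : (p ^ N - 1 + σ + 2 * δ) % (2 * p ^ (N + 1)) = p ^ N - 1 + σ + 2 * δ :=
    Nat.mod_eq_of_lt hX
  have hr : p ^ N - 1 + σ + 2 * δ ≤ r := by
    have h3 : r % (2 * p ^ (N + 1)) = p ^ N - 1 + σ + 2 * δ := by
      rw [h2, hXM]
    calc p ^ N - 1 + σ + 2 * δ = r % (2 * p ^ (N + 1)) := h3.symm
      _ ≤ r := Nat.mod_le r _
  have hpar : r % 2 = (p ^ N - 1 + σ + 2 * δ) % 2 := Nat.ModEq.of_mul_right _ h2
  have hA : 1 ≤ p ^ N := Nat.one_le_pow _ _ (by omega)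
  omega
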